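/- Let G = (V,E) be a finite simple bipartite graph and let 𝒫(G) = { x ∈ ℝ^V : x_v ≥ 0 for all v ∈ V, and x_u + x_v ≤ 1 for every edge uv ∈ E }. Then every extreme point of 𝒫(G) has all coordinates in {0,1}; in particular every extreme point is an integer vector. -/

import Mathlib

/-- The polytope `𝒫(G)` of a simple graph `G`: nonnegative real vectors whose
coordinate sums over edges are at most `1`. -/
def graphPolytope {V : Type*} (G : SimpleGraph V) : Set (V → ℝ) :=
  {x | (∀ v, 0 ≤ x v) ∧ ∀ u v, G.Adj u v → x u + x v ≤ 1}

theorem bipartite_graphPolytope_extremePoints_integral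
    {V : Type*} [Fintype V] (G : SimpleGraph V) (hbip : G.Colorable 2)
    (x : V → ℝ) (hx : x ∈ Set.extremePoints ℝ (graphPolytope G)) :
    ∀ v, x v = 0 ∨ x v = 1 := by
  classical
  intro v
  by_contra hv
  push_neg at hv
  obtain ⟨hv0, hv1⟩ := hv
  obtain ⟨⟨hpos, hedge⟩, hxext⟩ := hx
  obtain ⟨c⟩ := hbip
  set S : Finset V := Finset.univ.filter (fun u => 0 < x u ∧ x u ≠ 1) with hSdef
  have hmemS : ∀ u, u ∈ S ↔ 0 < x u ∧ x u ≠ 1 := by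
    intro u; simp [hSdef]
  have hvS : v ∈ S := (hmemS v).2 ⟨lt_of_le_of_ne (hpos v) (Ne.symm hv0), hv1⟩
  have hSne : S.Nonempty := ⟨v, hvS⟩
  set ε : ℝ := S.inf' hSne (fun u => min (x u) |1 - x u|) with hεdef
  have hεpos : 0 < ε := by
    rw [hεdef, Finset.lt_inf'_iff]
    intro u hu
    obtain ⟨h1, h2⟩ := (hmemS u).1 hu
    exact lt_min h1 (abs_pos.2 (by intro h; apply h2; linarith))
  have hεle : ∀ u ∈ S, ε ≤ min (x u) |1 - x u| := fun u hu =>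
    Finset.inf'_le _ hu
  -- the key: having an edge at a vertex in S forces x u < 1, so |1 - x u| = 1 - x u
  have habs : ∀ u w, G.Adj u w → u ∈ S → |1 - x u| = 1 - x u := by
    intro u w hadj hu
    obtain ⟨h1, h2⟩ := (hmemS u).1 hu
    have := hedge u w hadj
    have := hpos w
    rw [abs_of_nonneg]; linarith
  -- vertex not in S with an edge to a vertex in S has coordinate 0
  have hzero : ∀ u w, G.Adj u w → u ∈ S → w ∉ S → x w = 0 := by
    intro u w hadj hu hw
    obtain ⟨h1, h2⟩ := (hmemS u).1 hu
    have he := hedge u w hadj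
    by_contra hne
    have h3 : 0 < x w := lt_of_le_of_ne (hpos w) (Ne.symm hne)
    have h4 : x w ≠ 1 := by intro h; rw [h] at he; linarith
    exact hw ((hmemS w).2 ⟨h3, h4⟩)
  -- the perturbation vector
  set s : V → ℝ := fun u => if u ∈ S then (if c u = 0 then ε else -ε) else 0
    with hsdef
  have hs0 : ∀ u, u ∉ S → s u = 0 := by intro u hu; simp [hsdef, hu]
  have hsabs : ∀ u, |s u| ≤ ε := by
    intro u
    by_cases hu : u ∈ S <;> simp [hsdef, hu]
    · by_cases hc : c u = 0 <;> simp [hc, abs_of_nonneg hεpos.le,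
        abs_of_nonpos (neg_nonpos.2 hεpos.le)]
    · exact hεpos.le
  have hscancel : ∀ u w, G.Adj u w → u ∈ S → w ∈ S → s u + s w = 0 := by
    intro u w hadj hu hw
    have hcne : c u ≠ c w := c.valid hadj
    simp only [hsdef, if_pos hu, if_pos hw]
    by_cases hcu : c u = 0
    · have hcw : ¬ (c w = 0) := by rw [hcu] at hcne; exact fun h => hcne h.symm
      simp [hcu, hcw]
    · have hcw : c w = 0 := by omega
      simp [hcu, hcw]
  -- both perturbed points lie in the polytope
  have key : ∀ t : V → ℝ, (∀ u, u ∉ S → t u = 0) → (∀ u, |t u| ≤ ε) →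
      (∀ u w, G.Adj u w → u ∈ S → w ∈ S → t u + t w = 0) →
      (x + t) ∈ graphPolytope G := by
    intro t ht0 htabs htc
    constructor
    · intro u
      by_cases hu : u ∈ S
      · have h1 := hεle u hu
        have h2 := htabs u
        have h3 := abs_le.1 h2
        have : ε ≤ x u := le_trans h1 (min_le_left _ _)
        simp only [Pi.add_apply]; linarith [h3.1]
      · simp [Pi.add_apply, ht0 u hu, hpos u]
    · intro u w hadj
      have he := hedge u w hadj
      simp only [Pi.add_apply]
      by_cases hu : u ∈ S <;> by_cases hw : w ∈ S
      · have := htc u w hadj hu hw; linarith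
      · have hxw : x w = 0 := hzero u w hadj hu hw
        have h1 := hεle u hu
        have h2 := (abs_le.1 (htabs u)).2
        rw [habs u w hadj hu] at h1
        have : ε ≤ 1 - x u := le_trans h1 (min_le_right _ _)
        rw [ht0 w hw, hxw]; linarith
      · have hxu : x u = 0 := hzero w u hadj.symm hw hu
        have h1 := hεle w hw
        have h2 := (abs_le.1 (htabs w)).2
        rw [habs w u hadj.symm hw] at h1
        have : ε ≤ 1 - x w := le_trans h1 (min_le_right _ _)
        rw [ht0 u hu, hxu]; linarith
      · rw [ht0 u hu, ht0 w hw]; linarith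
  have hnegabs : ∀ u, |(-s) u| ≤ ε := by
    intro u; simpa using hsabs u
  have hy : (x + s) ∈ graphPolytope G := key s hs0 hsabs hscancel
  have hz : (x + (-s)) ∈ graphPolytope G := by
    refine key (-s) (fun u hu => by simp [hs0 u hu]) hnegabs ?_
    intro u w hadj hu hw
    have := hscancel u w hadj hu hw
    simp only [Pi.neg_apply]; linarith
  have hmem : x ∈ openSegment ℝ (x + s) (x + (-s)) := by
    refine ⟨1/2, 1/2, by norm_num, by norm_num, by norm_num, ?_⟩
    funext u
    simp only [Pi.add_apply, Pi.neg_apply, Pi.smul_apply, smul_eq_mul]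
    ring
  have heq := hxext hy hz hmem
  have : s v = 0 := by
    have := congrFun heq v
    simp only [Pi.add_apply] at this
    linarith
  rw [hsdef] at this
  simp only [if_pos hvS] at this
  by_cases hc : c v = 0 <;> simp [hc] at this <;> linarith
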